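/- Let (Ω, Σ, μ) be a measure space, X(μ) a Banach function space, and T : X(μ) → L⁰(μ) a lattice Lipschitz operator with bound function K, i.e., for all f, g ∈ X(μ), |T(f)(w) − T(g)(w)| ≤ K(w)·|f(w) − g(w)| μ-a.e. Then there exists a function Φ : Ω → (ℝ → ℝ) such that for every λ ∈ ℝ, the function w ↦ Φ(w)(λ) is a representative of T(λχ_Ω), and for every w ∈ Ω, the function Φ(w) : ℝ → ℝ is K(w)-Lipschitz. -/

import Mathlib

open MeasureTheory Filter Set Topology

structure BanachFunctionSpace (Ω : Type*) [MeasurableSpace Ω] (μ : Measure Ω) where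
  carrier : Set (Ω → ℝ)
  norm : (Ω → ℝ) → ℝ
  measurable_mem : ∀ f ∈ carrier, Measurable f
  zero_mem : (fun _ => (0 : ℝ)) ∈ carrier
  one_mem : (fun _ => (1 : ℝ)) ∈ carrier
  add_mem : ∀ f ∈ carrier, ∀ g ∈ carrier, f + g ∈ carrier
  smul_mem : ∀ (c : ℝ), ∀ f ∈ carrier, c • f ∈ carrier
  ideal_mem : ∀ f : Ω → ℝ, Measurable f → ∀ g ∈ carrier,
    (∀ᵐ w ∂μ, |f w| ≤ |g w|) → f ∈ carrier
  norm_nonneg : ∀ f, 0 ≤ norm f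
  norm_congr : ∀ f g : Ω → ℝ, f =ᵐ[μ] g → norm f = norm g
  norm_pos : ∀ f ∈ carrier, ¬ (f =ᵐ[μ] (fun _ => (0 : ℝ))) → 0 < norm f
  norm_triangle : ∀ f ∈ carrier, ∀ g ∈ carrier, norm (f + g) ≤ norm f + norm g
  norm_smul : ∀ (c : ℝ) (f : Ω → ℝ), norm (c • f) = |c| * norm f
  norm_mono : ∀ f ∈ carrier, ∀ g ∈ carrier,
    (∀ᵐ w ∂μ, |f w| ≤ |g w|) → norm f ≤ norm g
  complete : ∀ F : ℕ → Ω → ℝ, (∀ n, F n ∈ carrier) →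
    (∀ ε : ℝ, 0 < ε → ∃ N, ∀ m ≥ N, ∀ n ≥ N, norm (F m - F n) < ε) →
    ∃ f ∈ carrier, Tendsto (fun n => norm (F n - f)) atTop (𝓝 0)

/-- The Lipschitz constant of a real function, as an infimum of admissible constants. -/
noncomputable def lipConst (φ : ℝ → ℝ) : ℝ :=
  sInf {K : ℝ | 0 ≤ K ∧ ∀ x y : ℝ, |φ x - φ y| ≤ K * |x - y|}

/-- Membership in `Lip₀(ℝ)`: Lipschitz and vanishing at `0`. -/
def IsLip0 (φ : ℝ → ℝ) : Prop := φ 0 = 0 ∧ ∃ K : NNReal, LipschitzWith K φ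

/-- A simple `Lip₀(ℝ)`-valued function: finitely many values, measurable fibers,
all values Lipschitz and vanishing at 0. -/
def SimpleLipValued {Ω : Type*} [MeasurableSpace Ω] (ψ : Ω → ℝ → ℝ) : Prop :=
  (Set.range ψ).Finite ∧ (∀ φ : ℝ → ℝ, MeasurableSet {w | ψ w = φ}) ∧ ∀ w, IsLip0 (ψ w)

/-- Strong measurability of a `Lip₀(ℝ)`-valued function: a.e. limit (in the
Lipschitz-constant norm) of a sequence of simple `Lip₀(ℝ)`-valued functions. -/
def StronglyMeasLip {Ω : Type*} [MeasurableSpace Ω] (μ : Measure Ω) (Φ : Ω → ℝ → ℝ) : Prop :=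
  ∃ ψ : ℕ → Ω → ℝ → ℝ, (∀ n, SimpleLipValued (ψ n)) ∧
    ∀ᵐ w ∂μ, Tendsto (fun n => lipConst (Φ w - ψ n w)) atTop (𝓝 0)

/-- every lattice Lipschitz operator `T : X(μ) → L⁰(μ)` with bound
function `K` admits a function `Φ : Ω → (ℝ → ℝ)` such that `Φ(·)(λ)` is a
representative of `T(λχ_Ω)` for each `λ`, and `Φ(w)` is `K(w)`-Lipschitz for every `w`. -/
theorem stmt10 {Ω : Type*} [MeasurableSpace Ω] (μ : Measure Ω)
    (X : BanachFunctionSpace Ω μ)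
    (T : (Ω → ℝ) → (Ω → ℝ)) (K : Ω → ℝ) (hK : ∀ w, 0 ≤ K w)
    (hconst : ∀ lam : ℝ, (fun _ : Ω => lam) ∈ X.carrier)
    (hLip : ∀ f ∈ X.carrier, ∀ g ∈ X.carrier,
      ∀ᵐ w ∂μ, |T f w - T g w| ≤ K w * |f w - g w|) :
    ∃ Φ : Ω → ℝ → ℝ,
      (∀ lam : ℝ, (fun w => Φ w lam) =ᵐ[μ] T (fun _ => lam)) ∧
      (∀ w : Ω, ∀ x y : ℝ, |Φ w x - Φ w y| ≤ K w * |x - y|) := by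
  classical
  set g : ℚ → Ω → ℝ := fun q => T (fun _ => (q:ℝ)) with hg
  have hae : ∀ᵐ w ∂μ, ∀ p : ℚ × ℚ, |g p.1 w - g p.2 w| ≤ K w * |((p.1:ℝ)) - ((p.2:ℝ))| := by
    rw [MeasureTheory.ae_all_iff]
    intro p
    simpa using hLip _ (hconst (p.1:ℝ)) _ (hconst (p.2:ℝ))
  set good : Ω → Prop := fun w => ∀ q q' : ℚ, |g q w - g q' w| ≤ K w * |((q:ℝ)) - ((q':ℝ))|
    with hgood
  set Φ : Ω → ℝ → ℝ := fun w =>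
    if good w then (fun x => ⨅ q : ℚ, (g q w + K w * |x - (q:ℝ)|)) else 0 with hΦ
  have hbdd : ∀ w, good w → ∀ x : ℝ,
      BddBelow (Set.range fun q : ℚ => g q w + K w * |x - (q:ℝ)|) := by
    intro w hw x
    refine ⟨g 0 w - K w * |x|, ?_⟩
    rintro y ⟨q, rfl⟩
    have h1 := hw 0 q
    have htri : |(q:ℝ)| ≤ |x| + |x - (q:ℝ)| := by
      have h := abs_sub_abs_le_abs_sub ((q:ℝ)) x
      rw [abs_sub_comm] at h
      linarith
    have habs : g 0 w - g q w ≤ K w * |(q:ℝ)| := by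
      have := (abs_le.mp h1).2
      simpa using this
    have hmul : K w * |(q:ℝ)| ≤ K w * (|x| + |x - (q:ℝ)|) :=
      mul_le_mul_of_nonneg_left htri (hK w)
    show g 0 w - K w * |x| ≤ g q w + K w * |x - (q:ℝ)|
    linarith
  have hlipΦ : ∀ w : Ω, ∀ x y : ℝ, |Φ w x - Φ w y| ≤ K w * |x - y| := by
    have key : ∀ w, good w → ∀ x y : ℝ, Φ w x ≤ Φ w y + K w * |x - y| := by
      intro w hw x y
      rw [hΦ]
      simp only [if_pos hw]
      rw [← sub_le_iff_le_add]
      refine le_ciInf fun q => ?_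
      rw [sub_le_iff_le_add]
      have h1 : (⨅ q : ℚ, (g q w + K w * |x - (q:ℝ)|)) ≤ g q w + K w * |x - (q:ℝ)| :=
        ciInf_le (hbdd w hw x) q
      have htri : |x - (q:ℝ)| ≤ |x - y| + |y - (q:ℝ)| := by
        have : x - (q:ℝ) = (x - y) + (y - (q:ℝ)) := by ring
        rw [this]; exact abs_add_le _ _
      have := mul_le_mul_of_nonneg_left htri (hK w)
      linarith
    intro w x y
    by_cases hw : good w
    · have h1 := key w hw x y
      have h2 := key w hw y x
      rw [abs_sub_comm y x] at h2
      rw [abs_le]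
      constructor <;> linarith
    · rw [hΦ]
      simp only [if_neg hw]
      simpa using mul_nonneg (hK w) (abs_nonneg (x - y))
  refine ⟨Φ, ?_, hlipΦ⟩
  intro lam
  have hae2 : ∀ᵐ w ∂μ, ∀ q : ℚ, |T (fun _ => lam) w - g q w| ≤ K w * |lam - (q:ℝ)| := by
    rw [MeasureTheory.ae_all_iff]
    intro q
    simpa using hLip _ (hconst lam) _ (hconst (q:ℝ))
  filter_upwards [hae, hae2] with w hw1 hw2
  have hw : good w := fun q q' => hw1 (q, q')
  rw [hΦ]
  simp only [if_pos hw]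
  have hle : T (fun _ => lam) w ≤ ⨅ q : ℚ, (g q w + K w * |lam - (q:ℝ)|) := by
    refine le_ciInf fun q => ?_
    have := (abs_le.mp (hw2 q)).2
    linarith
  have hge : (⨅ q : ℚ, (g q w + K w * |lam - (q:ℝ)|)) ≤ T (fun _ => lam) w := by
    refine le_of_forall_pos_le_add fun ε hε => ?_
    obtain ⟨q, hq⟩ := exists_rat_near lam (show (0:ℝ) < ε / (2 * (K w + 1)) by have := hK w; positivity)
    have h1 : (⨅ q : ℚ, (g q w + K w * |lam - (q:ℝ)|)) ≤ g q w + K w * |lam - (q:ℝ)| :=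
      ciInf_le (hbdd w hw lam) q
    have h2 : g q w ≤ T (fun _ => lam) w + K w * |lam - (q:ℝ)| := by
      have := (abs_le.mp (hw2 q)).1
      linarith
    have h3 : K w * |lam - (q:ℝ)| ≤ K w * (ε / (2 * (K w + 1))) :=
      mul_le_mul_of_nonneg_left hq.le (hK w)
    have h4 : K w * (ε / (2 * (K w + 1))) ≤ ε / 2 := by
      have hKw := hK w
      have hpos : (0:ℝ) < K w + 1 := by linarith
      have heq : K w * (ε / (2 * (K w + 1))) = (K w / (K w + 1)) * (ε / 2) := by
        field_simp
      rw [heq]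
      have hle1 : K w / (K w + 1) ≤ 1 := by rw [div_le_one hpos]; linarith
      have hd0 : 0 ≤ K w / (K w + 1) := by positivity
      nlinarith [hε.le]
    linarith
  linarith [le_antisymm hle hge]
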